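/- For all integers i, j ≥ 3 there exists an integer W(i,j) such that for all x ∈ F_i and y ∈ F_j, the sum x + y mod 1 lies in F_{W(i,j)}. In particular, the Erdős set E = ⋃_{i≥3} F_i is closed under addition modulo 1. -/

import Mathlib

open Filter MeasureTheory Set

/-- The `n`-th binary digit of `x ∈ [0,1)` (dyadic rationals get the
terminating expansion, i.e. the one with finitely many `1`'s). -/
noncomputable def digit (x : ℝ) (n : ℕ) : ℕ := (⌊x * 2 ^ n⌋).toNat % 2

/-- Positions of digit `1` in the binary expansion of `x`. -/
def onesOf (x : ℝ) : Set ℕ := {n : ℕ | digit x n = 1}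

/-- `A` contains an `m`-term arithmetic progression. -/
def HasAP (A : Set ℕ) (m : ℕ) : Prop :=
  ∃ a d : ℕ, 1 ≤ d ∧ ∀ t < m, a + t * d ∈ A

/-- `F i`: numbers in `[0,1)` whose binary expansion contains no `i`-term
arithmetic progression of positions of digit `1`. -/
noncomputable def F (i : ℕ) : Set ℝ :=
  {x ∈ Set.Ico (0 : ℝ) 1 | ¬ HasAP (onesOf x) i}

/-- The Erdős set. -/
noncomputable def E : Set ℝ := ⋃ i, ⋃ (_ : 3 ≤ i), F i

/-! ### Auxiliary lemmas -/

/-- Finitary van der Waerden theorem, derived from the Hales–Jewett theorem. -/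
lemma vdW_finite (m : ℕ) (κ : Type) [Fintype κ] :
    ∃ W : ℕ, ∀ C : ℕ → κ, ∃ b d : ℕ, 1 ≤ d ∧ ∃ c : κ,
      ∀ t < m, b + t * d < W ∧ C (b + t * d) = c := by
  classical
  obtain ⟨ι, _inst, hι⟩ := Combinatorics.Line.exists_mono_in_high_dimension (Fin (m + 1)) κ
  refine ⟨(m + 1) * Fintype.card ι + 1, fun C => ?_⟩
  obtain ⟨l, c, hl⟩ := hι fun v => C (∑ i, (v i : ℕ))
  set s : Finset ι := Finset.univ.filter fun i => l.idxFun i = none with hs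
  have hsmem : l.proper.choose ∈ s := by
    rw [hs, Finset.mem_filter]
    exact ⟨Finset.mem_univ _, l.proper.choose_spec⟩
  refine ⟨∑ i ∈ sᶜ, ((l.idxFun i).map Fin.val).getD 0, s.card,
    Finset.card_pos.mpr ⟨l.proper.choose, hsmem⟩, c, fun t ht => ?_⟩
  have ht' : t < m + 1 := by omega
  have key : (∑ i, ((l ⟨t, ht'⟩ i : Fin (m + 1)) : ℕ))
      = (∑ i ∈ sᶜ, ((l.idxFun i).map Fin.val).getD 0) + t * s.card := by
    rw [← Finset.sum_add_sum_compl s, add_comm]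
    congr 1
    · apply Finset.sum_congr rfl
      intro i hi
      rw [hs, Finset.compl_filter, Finset.mem_filter] at hi
      obtain ⟨y, hy⟩ := Option.ne_none_iff_exists.mp hi.2
      simp [← hy]
    · rw [Finset.sum_congr rfl (fun i hi => ?_), Finset.sum_const, smul_eq_mul, mul_comm]
      rw [hs, Finset.mem_filter] at hi
      simp [hi.2]
  constructor
  · have h1 : (∑ i, ((l ⟨t, ht'⟩ i : Fin (m + 1)) : ℕ)) ≤ ∑ _i : ι, m :=
      Finset.sum_le_sum fun i _ => Nat.lt_succ_iff.mp (Fin.is_lt _)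
    rw [Finset.sum_const, smul_eq_mul, Finset.card_univ] at h1
    have := key ▸ h1
    have hcard : Fintype.card ι * m ≤ (m + 1) * Fintype.card ι := by
      rw [mul_comm]; exact Nat.mul_le_mul_right _ (by omega)
    omega
  · rw [← hl ⟨t, ht'⟩]
    congr 1
    exact key.symm

lemma digit_le_one (x : ℝ) (n : ℕ) : digit x n ≤ 1 :=
  Nat.lt_succ_iff.mp (Nat.mod_lt _ two_pos)

lemma digit_eq_one_iff {x : ℝ} (hx : 0 ≤ x) (n : ℕ) :
    digit x n = 1 ↔ ⌊x * 2 ^ n⌋ % 2 = 1 := by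
  unfold digit
  have h0 : (0 : ℤ) ≤ ⌊x * 2 ^ n⌋ := Int.floor_nonneg.mpr (by positivity)
  constructor
  · intro h
    have h2 := congrArg (Nat.cast : ℕ → ℤ) h
    push_cast at h2
    rwa [Int.toNat_of_nonneg h0] at h2
  · intro h
    have h2 : ((⌊x * 2 ^ n⌋.toNat % 2 : ℕ) : ℤ) = 1 := by
      push_cast
      rw [Int.toNat_of_nonneg h0]
      exact h
    exact_mod_cast h2

lemma floor_add_floor (a b : ℝ) : ⌊a + b⌋ = ⌊a⌋ + ⌊b⌋ + ⌊Int.fract a + Int.fract b⌋ := by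
  have h1 : a + b = Int.fract a + Int.fract b + ((⌊a⌋ + ⌊b⌋ : ℤ) : ℝ) := by
    rw [Int.fract, Int.fract]; push_cast; ring
  rw [h1, Int.floor_add_intCast]
  ring

lemma carry_parity (x y : ℝ) {n : ℕ} (hn : 1 ≤ n) :
    ⌊Int.fract (x + y) * 2 ^ n⌋ % 2
      = (⌊x * 2 ^ n⌋ + ⌊y * 2 ^ n⌋ + ⌊Int.fract (x * 2 ^ n) + Int.fract (y * 2 ^ n)⌋) % 2 := by
  have h1 : Int.fract (x + y) * 2 ^ n = x * 2 ^ n + y * 2 ^ n - ((⌊x + y⌋ * 2 ^ n : ℤ) : ℝ) := by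
    rw [Int.fract]; push_cast; ring
  rw [h1, Int.floor_sub_intCast, floor_add_floor]
  have h2 : (2 : ℤ) ∣ ⌊x + y⌋ * 2 ^ n :=
    Dvd.dvd.mul_left (dvd_pow_self 2 (Nat.one_le_iff_ne_zero.mp hn)) _
  obtain ⟨k, hk⟩ := h2
  rw [hk]
  omega

lemma digit_succ_eq_one {x : ℝ} (hx : 0 ≤ x) (n : ℕ) :
    digit x (n + 1) = 1 ↔ (1 / 2 : ℝ) ≤ Int.fract (x * 2 ^ n) := by
  rw [digit_eq_one_iff hx]
  have h1 : x * 2 ^ (n + 1) = Int.fract (x * 2 ^ n) * 2 + ((⌊x * 2 ^ n⌋ * 2 : ℤ) : ℝ) := by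
    rw [Int.fract]; push_cast; ring
  rw [h1, Int.floor_add_intCast]
  have hf0 := Int.fract_nonneg (x * 2 ^ n)
  have hf1 := Int.fract_lt_one (x * 2 ^ n)
  have hif : ⌊Int.fract (x * 2 ^ n) * 2⌋ = if (1 / 2 : ℝ) ≤ Int.fract (x * 2 ^ n) then 1 else 0 := by
    split_ifs with h
    · rw [Int.floor_eq_iff]
      constructor <;> push_cast <;> nlinarith
    · rw [Int.floor_eq_iff]
      constructor <;> push_cast <;> nlinarith
  rw [hif]
  split_ifs with h
  · constructor
    · intro _; exact h
    · intro _; omega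
  · constructor
    · intro hmod; omega
    · intro hh; exact absurd hh h

lemma F_mono {W W' : ℕ} (h : W ≤ W') : F W ⊆ F W' := by
  rintro x ⟨h01, hAP⟩
  refine ⟨h01, fun hap => hAP ?_⟩
  obtain ⟨a, d, hd, hp⟩ := hap
  exact ⟨a, d, hd, fun t ht => hp t (lt_of_lt_of_le ht h)⟩

lemma main_sum (i j : ℕ) (hi : 1 ≤ i) (hj : 1 ≤ j) :
    ∃ W : ℕ, ∀ x ∈ F i, ∀ y ∈ F j, Int.fract (x + y) ∈ F W := by
  classical
  set m := max i j with hm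
  obtain ⟨W, hW⟩ := vdW_finite m (Bool × Bool × Bool × Bool)
  refine ⟨W, ?_⟩
  rintro x ⟨hx01, hxAP⟩ y ⟨hy01, hyAP⟩
  have hx0 : (0 : ℝ) ≤ x := hx01.1
  have hy0 : (0 : ℝ) ≤ y := hy01.1
  set z := Int.fract (x + y) with hzdef
  refine ⟨⟨Int.fract_nonneg _, Int.fract_lt_one _⟩, ?_⟩
  rintro ⟨a, d, hd, hAP⟩
  -- color index `t` by the digits of `x` and `y` at positions `a + t*d` and `a + t*d + 1`
  obtain ⟨b, e, he, ⟨cx, cy, cx', cy'⟩, hc⟩ := hW fun t =>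
    (decide (digit x (a + t * d) = 1), decide (digit y (a + t * d) = 1),
     decide (digit x (a + t * d + 1) = 1), decide (digit y (a + t * d + 1) = 1))
  set q := a + b * d with hq
  set f := e * d with hf
  have hf1 : 1 ≤ f := Nat.one_le_iff_ne_zero.mpr (by positivity)
  have hpos : ∀ s < m, a + (b + s * e) * d = q + s * f := by
    intro s _; rw [hq, hf]; ring
  -- digits of z along the AP are 1
  have hz1 : ∀ s < m, digit z (q + s * f) = 1 := by
    intro s hs
    rw [← hpos s hs]
    exact hAP _ ((hc _ hs).1)
  -- digit colors are constant
  have hcol : ∀ s < m,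
      decide (digit x (q + s * f) = 1) = cx ∧ decide (digit y (q + s * f) = 1) = cy ∧
      decide (digit x (q + s * f + 1) = 1) = cx' ∧ decide (digit y (q + s * f + 1) = 1) = cy' := by
    intro s hs
    have h2 := (hc s hs).2
    rw [hpos s hs] at h2
    simpa using h2
  have hzm : 1 ≤ m := le_trans hi (le_max_left _ _)
  -- positions are ≥ 1
  have hpge : ∀ s < m, 1 ≤ q + s * f := by
    intro s hs
    by_contra hcon
    have h0 : q + s * f = 0 := by omega
    have := hz1 s hs
    rw [h0] at this
    have hz01 : ⌊z * 2 ^ (0 : ℕ)⌋ = 0 := by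
      rw [pow_zero, mul_one]
      exact Int.floor_eq_zero_iff.mpr ⟨Int.fract_nonneg _, Int.fract_lt_one _⟩
    unfold digit at this
    rw [hz01] at this
    simp at this
  -- helper to derive a contradiction from an AP of ones in x or y
  have hcontra_x : ∀ Q : ℕ, (∀ s < m, digit x (Q + s * f) = 1) → False := by
    intro Q hQ
    exact hxAP ⟨Q, f, hf1, fun t ht => hQ t (lt_of_lt_of_le ht (le_max_left _ _))⟩
  have hcontra_y : ∀ Q : ℕ, (∀ s < m, digit y (Q + s * f) = 1) → False := by
    intro Q hQ
    exact hyAP ⟨Q, f, hf1, fun t ht => hQ t (lt_of_lt_of_le ht (le_max_right _ _))⟩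
  by_cases hcx : cx = true
  · exact hcontra_x q fun s hs => of_decide_eq_true (((hcol s hs).1).trans hcx)
  by_cases hcy : cy = true
  · exact hcontra_y q fun s hs => of_decide_eq_true (((hcol s hs).2.1).trans hcy)
  -- both digits of x and y are 0 along the AP, so there is a carry
  have hcarry : ∀ s < m, digit x (q + s * f + 1) = 1 ∨ digit y (q + s * f + 1) = 1 := by
    intro s hs
    set p := q + s * f with hp
    have hxp : digit x p ≠ 1 := by
      intro hh
      exact hcx (((hcol s hs).1).symm.trans (decide_eq_true hh))
    have hyp : digit y p ≠ 1 := by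
      intro hh
      exact hcy (((hcol s hs).2.1).symm.trans (decide_eq_true hh))
    have hxm : ⌊x * 2 ^ p⌋ % 2 = 0 := by
      have := (digit_eq_one_iff hx0 p).not.mp hxp
      omega
    have hym : ⌊y * 2 ^ p⌋ % 2 = 0 := by
      have := (digit_eq_one_iff hy0 p).not.mp hyp
      omega
    have hzp : ⌊z * 2 ^ p⌋ % 2 = 1 := (digit_eq_one_iff (Int.fract_nonneg _) p).mp (hz1 s hs)
    have hpar := carry_parity x y (hpge s hs)
    rw [← hzdef, ← hp] at hpar
    have hfx0 := Int.fract_nonneg (x * 2 ^ p)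
    have hfx1 := Int.fract_lt_one (x * 2 ^ p)
    have hfy0 := Int.fract_nonneg (y * 2 ^ p)
    have hfy1 := Int.fract_lt_one (y * 2 ^ p)
    have hc0 : (0 : ℤ) ≤ ⌊Int.fract (x * 2 ^ p) + Int.fract (y * 2 ^ p)⌋ :=
      Int.floor_nonneg.mpr (by linarith)
    have hc1 : ⌊Int.fract (x * 2 ^ p) + Int.fract (y * 2 ^ p)⌋ < 2 :=
      Int.floor_lt.mpr (by push_cast; linarith)
    have hceq : ⌊Int.fract (x * 2 ^ p) + Int.fract (y * 2 ^ p)⌋ = 1 := by omega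
    have hsum : (1 : ℝ) ≤ Int.fract (x * 2 ^ p) + Int.fract (y * 2 ^ p) := by
      have := Int.floor_le (Int.fract (x * 2 ^ p) + Int.fract (y * 2 ^ p))
      rw [hceq] at this
      exact_mod_cast this
    by_cases hhalf : (1 / 2 : ℝ) ≤ Int.fract (x * 2 ^ p)
    · exact Or.inl ((digit_succ_eq_one hx0 p).mpr hhalf)
    · exact Or.inr ((digit_succ_eq_one hy0 p).mpr (by linarith [not_le.mp hhalf]))
  -- use s = 0 to decide which of cx', cy' is true
  obtain h0 | h0 := hcarry 0 (by omega)
  · have hcx' : cx' = true := ((hcol 0 (by omega)).2.2.1).symm.trans (decide_eq_true h0)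
    refine hcontra_x (q + 1) fun s hs => ?_
    have := of_decide_eq_true (((hcol s hs).2.2.1).trans hcx')
    rwa [show q + 1 + s * f = q + s * f + 1 by ring]
  · have hcy' : cy' = true := ((hcol 0 (by omega)).2.2.2).symm.trans (decide_eq_true h0)
    refine hcontra_y (q + 1) fun s hs => ?_
    have := of_decide_eq_true (((hcol s hs).2.2.2).trans hcy')
    rwa [show q + 1 + s * f = q + s * f + 1 by ring]

theorem stmt6 :
    (∀ i j : ℕ, 3 ≤ i → 3 ≤ j → ∃ W : ℕ,
      ∀ x ∈ F i, ∀ y ∈ F j, Int.fract (x + y) ∈ F W) ∧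
    (∀ x ∈ E, ∀ y ∈ E, Int.fract (x + y) ∈ E) := by
  constructor
  · intro i j hi hj
    exact main_sum i j (by omega) (by omega)
  · intro x hx y hy
    simp only [E, Set.mem_iUnion] at hx hy ⊢
    obtain ⟨i, hi, hxF⟩ := hx
    obtain ⟨j, hj, hyF⟩ := hy
    obtain ⟨W, hW⟩ := main_sum i j (by omega) (by omega)
    exact ⟨max W 3, le_max_right _ _, F_mono (le_max_left _ _) (hW x hxF y hyF)⟩
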